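/- Triviality of the kernel of the linearized heteroclinic operator with Dirichlet condition at 0 and decay at infinity: if f : [0,∞) → ℝ is twice continuously differentiable, satisfies f''(z) = (3ℍ(z)² − 1) f(z) for all z ≥ 0, f(0) = 0, and f(z) → 0 as z → +∞, then f is identically zero on [0,∞). -/

import Mathlib

open Filter

/-- The heteroclinic `ℍ(z) = tanh(z / √2)`. -/
noncomputable def Het : ℝ → ℝ := fun z => Real.tanh (z / Real.sqrt 2)

lemma tanh_hasDerivAt (x : ℝ) : HasDerivAt Real.tanh (1 - Real.tanh x ^ 2) x := by
  have h : HasDerivAt (fun y => Real.sinh y / Real.cosh y)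
      ((Real.cosh x * Real.cosh x - Real.sinh x * Real.sinh x) / Real.cosh x ^ 2) x :=
    (Real.hasDerivAt_sinh x).div (Real.hasDerivAt_cosh x) (Real.cosh_pos x).ne'
  have heq : (fun y => Real.sinh y / Real.cosh y) = Real.tanh := by
    funext y; rw [Real.tanh_eq_sinh_div_cosh]
  rw [heq] at h
  convert h using 1
  rw [Real.tanh_eq_sinh_div_cosh]
  have hc := (Real.cosh_pos x).ne'
  have hs := Real.cosh_sq_sub_sinh_sq x
  field_simp

lemma tanh_sq_lt_one (x : ℝ) : Real.tanh x ^ 2 < 1 := by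
  rw [Real.tanh_eq_sinh_div_cosh]
  have hc := Real.cosh_pos x
  have hs := Real.cosh_sq_sub_sinh_sq x
  rw [div_pow, div_lt_one (by positivity)]
  nlinarith

lemma sqrt2_pos : (0:ℝ) < Real.sqrt 2 := Real.sqrt_pos.2 (by norm_num)

lemma Het_hasDerivAt (z : ℝ) :
    HasDerivAt Het ((1 - Het z ^ 2) / Real.sqrt 2) z := by
  have h : HasDerivAt (fun y : ℝ => y / Real.sqrt 2) (1 / Real.sqrt 2) z :=
    (hasDerivAt_id z).div_const _
  have := (tanh_hasDerivAt (z / Real.sqrt 2)).comp z h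
  rw [show Het = Real.tanh ∘ fun y => y / Real.sqrt 2 from rfl]; simpa [div_eq_mul_inv, mul_comm] using this

/-- `phi = ℍ'`, a positive solution of the linearized equation. -/
noncomputable def phi : ℝ → ℝ := fun z => (1 - Het z ^ 2) / Real.sqrt 2

/-- `phi' = ℍ''`. -/
noncomputable def phiD : ℝ → ℝ := fun z => -(Het z) * (1 - Het z ^ 2)

lemma phi_hasDerivAt (z : ℝ) : HasDerivAt phi (phiD z) z := by
  have h : HasDerivAt (fun y => (1 - Het y ^ 2) / Real.sqrt 2)
      ((0 - 2 * Het z ^ 1 * ((1 - Het z ^ 2) / Real.sqrt 2)) / Real.sqrt 2) z :=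
    ((hasDerivAt_const z (1:ℝ)).sub ((Het_hasDerivAt z).pow 2)).div_const _
  have h2 : Real.sqrt 2 * Real.sqrt 2 = 2 := Real.mul_self_sqrt (by norm_num)
  have hne := sqrt2_pos.ne'
  refine h.congr_deriv ?_
  simp only [phiD]
  field_simp
  rw [Real.sq_sqrt (by norm_num)]; ring

lemma phiD_hasDerivAt (z : ℝ) :
    HasDerivAt phiD ((3 * Het z ^ 2 - 1) * phi z) z := by
  have h : HasDerivAt (fun y => -(Het y) * (1 - Het y ^ 2))
      (-((1 - Het z ^ 2) / Real.sqrt 2) * (1 - Het z ^ 2) +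
        -(Het z) * (0 - 2 * Het z ^ 1 * ((1 - Het z ^ 2) / Real.sqrt 2))) z :=
    (Het_hasDerivAt z).neg.mul ((hasDerivAt_const z (1:ℝ)).sub ((Het_hasDerivAt z).pow 2))
  refine h.congr_deriv ?_
  simp only [phi]
  ring

lemma abs_Het_le_one (z : ℝ) : |Het z| ≤ 1 := by
  have := tanh_sq_lt_one (z / Real.sqrt 2)
  have : Het z ^ 2 ≤ 1 := le_of_lt this
  nlinarith [abs_nonneg (Het z), sq_abs (Het z)]

lemma abs_phi_le_one (z : ℝ) : |phi z| ≤ 1 := by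
  have h1 : Het z ^ 2 < 1 := tanh_sq_lt_one _
  have h2 : (0:ℝ) ≤ Het z ^ 2 := sq_nonneg _
  have hs : (1:ℝ) ≤ Real.sqrt 2 := by
    rw [show (1:ℝ) = Real.sqrt 1 by simp]
    exact Real.sqrt_le_sqrt (by norm_num)
  rw [phi, abs_div, abs_of_pos sqrt2_pos]
  rw [div_le_one sqrt2_pos]
  calc |1 - Het z ^ 2| = 1 - Het z ^ 2 := abs_of_pos (by linarith)
    _ ≤ 1 := by linarith
    _ ≤ Real.sqrt 2 := hs

lemma abs_phiD_le_one (z : ℝ) : |phiD z| ≤ 1 := by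
  have h1 : Het z ^ 2 < 1 := tanh_sq_lt_one _
  have h2 : (0:ℝ) ≤ Het z ^ 2 := sq_nonneg _
  rw [phiD, abs_mul, abs_neg]
  calc |Het z| * |1 - Het z ^ 2| ≤ 1 * 1 := by
        apply mul_le_mul (abs_Het_le_one z) _ (abs_nonneg _) zero_le_one
        rw [abs_of_pos (by linarith)]; linarith
    _ = 1 := one_mul 1

/-- Triviality of the kernel of the linearized heteroclinic operator with Dirichlet
condition at `0` and decay at infinity: if `f` is twice continuously differentiable on
`[0, ∞)`, satisfies `f'' = (3ℍ² - 1) f` there, `f(0) = 0`, and `f → 0` at `+∞`, then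
`f ≡ 0` on `[0, ∞)`. -/
theorem linearized_kernel_trivial (f : ℝ → ℝ)
    (hf : ContDiffOn ℝ 2 f (Set.Ici 0))
    (hode : ∀ z ∈ Set.Ici (0 : ℝ),
      derivWithin (derivWithin f (Set.Ici 0)) (Set.Ici 0) z = (3 * Het z ^ 2 - 1) * f z)
    (h0 : f 0 = 0)
    (hlim : Tendsto f atTop (nhds 0)) :
    ∀ z ∈ Set.Ici (0 : ℝ), f z = 0 := by
  set S : Set ℝ := Set.Ici 0 with hS
  set f1 : ℝ → ℝ := derivWithin f S with hf1def
  have hud : UniqueDiffOn ℝ S := uniqueDiffOn_Ici 0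
  have hdf : ∀ z ∈ S, HasDerivWithinAt f (f1 z) S z := fun z hz =>
    ((hf.differentiableOn (by norm_num)) z hz).hasDerivWithinAt
  have hcd1 : ContDiffOn ℝ 1 f1 S := hf.derivWithin hud (by norm_num)
  have hdf1 : ∀ z ∈ S, HasDerivWithinAt f1 ((3 * Het z ^ 2 - 1) * f z) S z := by
    intro z hz
    have := ((hcd1.differentiableOn (by norm_num)) z hz).hasDerivWithinAt
    rwa [hode z hz] at this
  have hfc : ContinuousOn f S := hf.continuousOn
  have hf1c : ContinuousOn f1 S := hcd1.continuousOn
  -- Wronskian W = f1 * phi - f * phiD is constant on S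
  set W : ℝ → ℝ := fun z => f1 z * phi z - f z * phiD z with hWdef
  have hdW : ∀ z ∈ S, HasDerivWithinAt W 0 S z := by
    intro z hz
    have h := ((hdf1 z hz).mul (phi_hasDerivAt z).hasDerivWithinAt).sub
      ((hdf z hz).mul (phiD_hasDerivAt z).hasDerivWithinAt)
    refine h.congr_deriv ?_
    ring
  have hphic : Continuous phi := Differentiable.continuous fun z => (phi_hasDerivAt z).differentiableAt
  have hphiDc : Continuous phiD := Differentiable.continuous fun z => (phiD_hasDerivAt z).differentiableAt
  have hWc : ContinuousOn W S :=
    (hf1c.mul hphic.continuousOn).sub (hfc.mul hphiDc.continuousOn)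
  have hWconst : ∀ z ∈ S, W z = W 0 := by
    intro z hz
    have key := constant_of_has_deriv_right_zero (f := W) (a := 0) (b := z)
      (hWc.mono (Set.Icc_subset_Ici_self))
      (fun x hx => (hdW x hx.1).mono (Set.Ici_subset_Ici.2 hx.1))
    exact key z ⟨hz, le_refl z⟩
  -- choose mean value points cₙ ∈ (n, n+1) with f1 (c n) = f (n+1) - f n
  have hmvt : ∀ n : ℕ, ∃ c ∈ Set.Ioo (n:ℝ) ((n:ℝ)+1), f1 c = (f ((n:ℝ)+1) - f n) / (((n:ℝ)+1) - n) := by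
    intro n
    have hab : (n:ℝ) < (n:ℝ) + 1 := by linarith
    refine exists_hasDerivAt_eq_slope f f1 hab (hfc.mono ?_) ?_
    · intro x hx
      exact le_trans (Nat.cast_nonneg n) hx.1
    · intro x hx
      have hxpos : (0:ℝ) < x := lt_of_le_of_lt (Nat.cast_nonneg n) hx.1
      exact (hdf x (le_of_lt hxpos)).hasDerivAt (Ici_mem_nhds hxpos)
  choose c hc hceq using hmvt
  have hctop : Tendsto c atTop atTop := by
    apply tendsto_atTop_mono (fun n => (hc n).1.le)
    exact tendsto_natCast_atTop_atTop
  -- f (c n) → 0 and f1 (c n) → 0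
  have hfcn : Tendsto (fun n => f (c n)) atTop (nhds 0) := hlim.comp hctop
  have hf1cn : Tendsto (fun n => f1 (c n)) atTop (nhds 0) := by
    have h1 : Tendsto (fun n : ℕ => f ((n:ℝ)+1)) atTop (nhds 0) :=
      hlim.comp (tendsto_atTop_add_const_right _ 1 tendsto_natCast_atTop_atTop)
    have h2 : Tendsto (fun n : ℕ => f (n:ℝ)) atTop (nhds 0) :=
      hlim.comp tendsto_natCast_atTop_atTop
    have : Tendsto (fun n : ℕ => f ((n:ℝ)+1) - f (n:ℝ)) atTop (nhds (0 - 0)) := h1.sub h2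
    rw [sub_zero] at this
    apply this.congr
    intro n
    rw [hceq n]
    simp
  -- W (c n) → 0, hence W 0 = 0
  have hWcn : Tendsto (fun n => W (c n)) atTop (nhds 0) := by
    have : Tendsto (fun n => |f1 (c n)| + |f (c n)|) atTop (nhds 0) := by
      have := (hf1cn.abs.add hfcn.abs)
      simpa using this
    apply squeeze_zero_norm _ this
    intro n
    have b1 : |f1 (c n) * phi (c n)| ≤ |f1 (c n)| := by
      rw [abs_mul]
      calc |f1 (c n)| * |phi (c n)| ≤ |f1 (c n)| * 1 :=
            mul_le_mul_of_nonneg_left (abs_phi_le_one _) (abs_nonneg _)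
        _ = |f1 (c n)| := mul_one _
    have b2 : |f (c n) * phiD (c n)| ≤ |f (c n)| := by
      rw [abs_mul]
      calc |f (c n)| * |phiD (c n)| ≤ |f (c n)| * 1 :=
            mul_le_mul_of_nonneg_left (abs_phiD_le_one _) (abs_nonneg _)
        _ = |f (c n)| := mul_one _
    calc ‖W (c n)‖ = |f1 (c n) * phi (c n) - f (c n) * phiD (c n)| := rfl
      _ ≤ |f1 (c n) * phi (c n)| + |f (c n) * phiD (c n)| := abs_sub _ _
      _ ≤ |f1 (c n)| + |f (c n)| := add_le_add b1 b2
  have hW0 : W 0 = 0 := by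
    have hconst : Tendsto (fun n => W (c n)) atTop (nhds (W 0)) := by
      have : (fun n => W (c n)) = fun _ => W 0 := by
        funext n
        exact hWconst (c n) (le_of_lt (lt_of_le_of_lt (Nat.cast_nonneg n) (hc n).1))
      rw [this]; exact tendsto_const_nhds
    exact tendsto_nhds_unique hconst hWcn
  -- deduce f1 0 = 0
  have hHet0 : Het 0 = 0 := by simp [Het]
  have hf10 : f1 0 = 0 := by
    have hphi0 : phi 0 = 1 / Real.sqrt 2 := by simp [phi, hHet0]
    have : f1 0 * (1 / Real.sqrt 2) = 0 := by
      have := hW0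
      rw [hWdef] at this
      simpa [h0, hphi0] using this
    have hne : (1:ℝ) / Real.sqrt 2 ≠ 0 := by positivity
    exact (mul_eq_zero.1 this).resolve_right hne
  -- Gronwall: F = (f, f1) has F 0 = 0 and ‖F'‖ ≤ 2‖F‖, so F ≡ 0
  intro z hz
  set F : ℝ → ℝ × ℝ := fun t => (f t, f1 t) with hFdef
  have hF0 : ‖F 0‖ ≤ 0 := by
    simp [hFdef, h0, hf10, Prod.norm_def]
  have key := norm_le_gronwallBound_of_norm_deriv_right_le (a := 0) (b := z)
    (f := F) (f' := fun t => (f1 t, (3 * Het t ^ 2 - 1) * f t)) (δ := 0) (K := 2) (ε := 0)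
    ((hfc.mono Set.Icc_subset_Ici_self).prodMk (hf1c.mono Set.Icc_subset_Ici_self))
    (fun x hx => ((hdf x hx.1).prodMk (hdf1 x hx.1)).mono (Set.Ici_subset_Ici.2 hx.1))
    hF0 ?_
  · have := key z ⟨hz, le_refl z⟩
    rw [gronwallBound_ε0_δ0] at this
    have hz0 : ‖F z‖ = 0 := le_antisymm this (norm_nonneg _)
    have : |f z| ≤ ‖F z‖ := by
      rw [Prod.norm_def]
      exact le_max_left _ _
    rw [hz0] at this
    exact abs_eq_zero.1 (le_antisymm this (abs_nonneg _))
  · intro x hx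
    have hq : |3 * Het x ^ 2 - 1| ≤ 2 := by
      have h1 : Het x ^ 2 < 1 := tanh_sq_lt_one _
      have h2 : (0:ℝ) ≤ Het x ^ 2 := sq_nonneg _
      rw [abs_le]; constructor <;> nlinarith
    rw [add_zero, Prod.norm_def, Prod.norm_def]
    simp only [Real.norm_eq_abs]
    have hb1 : |f1 x| ≤ 2 * max |f x| |f1 x| := by
      have := le_max_right |f x| |f1 x|
      have h0 : (0:ℝ) ≤ max |f x| |f1 x| := le_trans (abs_nonneg _) (le_max_left _ _)
      linarith
    have hb2 : |(3 * Het x ^ 2 - 1) * f x| ≤ 2 * max |f x| |f1 x| := by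
      rw [abs_mul]
      calc |3 * Het x ^ 2 - 1| * |f x| ≤ 2 * |f x| :=
            mul_le_mul_of_nonneg_right hq (abs_nonneg _)
        _ ≤ 2 * max |f x| |f1 x| := by
            have := le_max_left |f x| |f1 x|
            linarith
    exact max_le hb1 hb2
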